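/- Let A ∈ ℝ^{n×n} be symmetric positive-definite, M_0 ∈ ℝ^{n×n}, R_0 := I_n − A M_0, G_0 := −A R_0, and i ≥ 1. For every real polynomial q with deg q ≤ i and q(0) = 1, there exists M ∈ M_0 + K_i(A², G_0) such that ‖A⁻¹ − M‖_{F,A} ≤ (max over eigenvalues λ of A of |q(λ²)|) · ‖A⁻¹ − M_0‖_{F,A}. -/

import Mathlib

open Matrix

/-- Frobenius inner product `(X,Y)_F = trace (Xᵀ Y)`. -/
noncomputable def finner {n : ℕ} (X Y : Matrix (Fin n) (Fin n) ℝ) : ℝ :=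
  (Xᵀ * Y).trace

/-- Frobenius norm `‖X‖_F`. -/
noncomputable def fnorm {n : ℕ} (X : Matrix (Fin n) (Fin n) ℝ) : ℝ :=
  Real.sqrt (finner X X)

/-- A-weighted Frobenius inner product `(X,Y)_{F,A} = trace (Xᵀ A Y)`. -/
noncomputable def finnerA {n : ℕ} (A X Y : Matrix (Fin n) (Fin n) ℝ) : ℝ :=
  (Xᵀ * A * Y).trace

/-- A-weighted Frobenius norm `‖X‖_{F,A}`. -/
noncomputable def fnormA {n : ℕ} (A X : Matrix (Fin n) (Fin n) ℝ) : ℝ :=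
  Real.sqrt (finnerA A X X)

/-- Krylov subspace `K_i(B, X) = span {X, BX, …, B^(i-1) X}`. -/
noncomputable def krylov {n : ℕ} (i : ℕ) (B X : Matrix (Fin n) (Fin n) ℝ) :
    Submodule ℝ (Matrix (Fin n) (Fin n) ℝ) :=
  Submodule.span ℝ {Y | ∃ j < i, Y = B ^ j * X}

/- ### Auxiliary lemmas -/

theorem ncg_trace_nonneg {n : ℕ} {M : Matrix (Fin n) (Fin n) ℝ} (h : M.PosSemidef) :
    0 ≤ M.trace := by
  rw [Matrix.trace]
  refine Finset.sum_nonneg fun i _ => ?_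
  exact h.diag_nonneg

theorem ncg_aeval_diagonal {n : ℕ} (v : Fin n → ℝ) (p : Polynomial ℝ) :
    Polynomial.aeval (diagonal v) p = diagonal (fun k => p.eval (v k)) := by
  have h := Polynomial.aeval_algHom_apply (Matrix.diagonalAlgHom (R := ℝ)) v p
  simp only [Matrix.diagonalAlgHom_apply] at h
  have h2 : (Polynomial.aeval v p : Fin n → ℝ) = fun k => p.eval (v k) := by
    funext k
    have h3 := Polynomial.aeval_algHom_apply (Pi.evalAlgHom ℝ (fun _ : Fin n => ℝ) k) v p
    simp only [Pi.evalAlgHom_apply] at h3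
    rw [← h3, ← Polynomial.coe_aeval_eq_eval]
  rw [h, h2]

theorem ncg_cancel {n : ℕ} {U : Matrix (Fin n) (Fin n) ℝ} (h2 : star U * U = 1)
    (X : Matrix (Fin n) (Fin n) ℝ) : star U * (U * X) = X := by
  rw [← mul_assoc, h2, one_mul]

theorem ncg_conj_mul {n : ℕ} {U : Matrix (Fin n) (Fin n) ℝ} (h2 : star U * U = 1)
    (X Y : Matrix (Fin n) (Fin n) ℝ) :
    (U * X * star U) * (U * Y * star U) = U * (X * Y) * star U := by
  simp only [mul_assoc, ncg_cancel h2]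

theorem ncg_conj_pow {n : ℕ} (U D : Matrix (Fin n) (Fin n) ℝ) (h1 : U * star U = 1)
    (h2 : star U * U = 1) (k : ℕ) :
    (U * D * star U) ^ k = U * D ^ k * star U := by
  induction k with
  | zero => simpa using h1.symm
  | succ m ih => rw [pow_succ, pow_succ, ih]; simp only [mul_assoc, ncg_cancel h2]

theorem ncg_aeval_conj {n : ℕ} (U D : Matrix (Fin n) (Fin n) ℝ) (h1 : U * star U = 1)
    (h2 : star U * U = 1) (p : Polynomial ℝ) :
    Polynomial.aeval (U * D * star U) p = U * (Polynomial.aeval D p) * star U := by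
  induction p using Polynomial.induction_on' with
  | add f g hf hg => rw [map_add, map_add, hf, hg]; noncomm_ring
  | monomial k a =>
      rw [Polynomial.aeval_monomial, Polynomial.aeval_monomial, ncg_conj_pow U D h1 h2]
      simp only [← Algebra.smul_def, Matrix.smul_mul, Matrix.mul_smul]

theorem ncg_conj_smul {n : ℕ} (U : Matrix (Fin n) (Fin n) ℝ) (c : ℝ)
    (X : Matrix (Fin n) (Fin n) ℝ) :
    U * (c • X) * star U = c • (U * X * star U) := by
  rw [mul_smul_comm, smul_mul_assoc]

/-- Polynomial min-max bound for NCG. -/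
theorem ncg_polynomial_bound {n : ℕ} (hn : 0 < n)
    (A M₀ : Matrix (Fin n) (Fin n) ℝ) (hA : A.PosDef)
    (R₀ G₀ : Matrix (Fin n) (Fin n) ℝ)
    (hR₀ : R₀ = 1 - A * M₀) (hG₀ : G₀ = -(A * R₀))
    (i : ℕ) (hi : 1 ≤ i)
    (q : Polynomial ℝ) (hdeg : q.natDegree ≤ i) (hq0 : q.eval 0 = 1) :
    ∃ M : Matrix (Fin n) (Fin n) ℝ,
      (∃ V ∈ krylov i (A ^ 2) G₀, M = M₀ + V) ∧
      fnormA A (A⁻¹ - M) ≤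
        (⨆ k, |q.eval ((hA.1.eigenvalues k) ^ 2)|) * fnormA A (A⁻¹ - M₀) := by
  classical
  have hne : Nonempty (Fin n) := ⟨⟨0, hn⟩⟩
  have hAdet : IsUnit A.det := hA.det_pos.ne'.isUnit
  have hAinv : A * A⁻¹ = 1 := Matrix.mul_nonsing_inv A hAdet
  set E : Matrix (Fin n) (Fin n) ℝ := A⁻¹ - M₀ with hE
  have hG : G₀ = -(A ^ 2 * E) := by
    have hme : A * (A⁻¹ - M₀) = 1 - A * M₀ := by rw [Matrix.mul_sub, hAinv]
    rw [hG₀, hR₀, hE, ← hme, pow_two]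
    noncomm_ring
  set p := q.divX with hp
  set V := Polynomial.aeval (A ^ 2) p * G₀ with hV
  have hpdeg : p.natDegree < i := by
    have h : p.natDegree = q.natDegree - 1 := q.natDegree_divX_eq_natDegree_tsub_one
    omega
  refine ⟨M₀ + V, ⟨V, ?_, rfl⟩, ?_⟩
  · rw [hV, Polynomial.aeval_eq_sum_range, Finset.sum_mul]
    refine Submodule.sum_mem _ fun j hj => ?_
    rw [smul_mul_assoc]
    refine Submodule.smul_mem _ _ (Submodule.subset_span ?_)
    exact ⟨j, by have := Finset.mem_range.mp hj; omega, rfl⟩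
  · -- spectral setup
    set d := hA.1.eigenvalues with hd
    set U : Matrix (Fin n) (Fin n) ℝ := (hA.1.eigenvectorUnitary : Matrix (Fin n) (Fin n) ℝ) with hU
    have h1 : U * star U = 1 := (Matrix.mem_unitaryGroup_iff).mp hA.1.eigenvectorUnitary.2
    have h2 : star U * U = 1 := (Matrix.mem_unitaryGroup_iff').mp hA.1.eigenvectorUnitary.2
    have hspec : A = U * diagonal d * star U := hA.1.spectral_theorem
    have hA2 : A ^ 2 = U * diagonal (fun k => d k ^ 2) * star U := by
      rw [hspec, ncg_conj_pow U _ h1 h2, Matrix.diagonal_pow]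
      rfl
    set w : Fin n → ℝ := fun k => q.eval (d k ^ 2) with hw
    set Q := Polynomial.aeval (A ^ 2) q with hQ
    have hQdiag : Q = U * diagonal w * star U := by
      rw [hQ, hA2, ncg_aeval_conj U _ h1 h2, ncg_aeval_diagonal]
    have hq' : q = Polynomial.X * p + Polynomial.C 1 := by
      rw [hp]
      conv_lhs => rw [← q.X_mul_divX_add]
      rw [q.coeff_zero_eq_eval_zero, hq0]
    have hcomm : A ^ 2 * Polynomial.aeval (A ^ 2) p = Polynomial.aeval (A ^ 2) p * A ^ 2 := by
      have ha := _root_.map_mul (Polynomial.aeval (A ^ 2)) Polynomial.X p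
      have hb := _root_.map_mul (Polynomial.aeval (A ^ 2)) p Polynomial.X
      rw [Polynomial.aeval_X] at ha hb
      rw [← ha, ← hb, mul_comm]
    have hQE : A⁻¹ - (M₀ + V) = Q * E := by
      have e1 : Q = A ^ 2 * Polynomial.aeval (A ^ 2) p + 1 := by
        rw [hQ]
        conv_lhs => rw [hq']
        rw [map_add, _root_.map_mul, Polynomial.aeval_X, Polynomial.C_1, _root_.map_one]
      rw [e1, hV, hG, hcomm, hE]
      noncomm_ring
    -- the sup constant
    set C := ⨆ k, |q.eval (d k ^ 2)| with hC
    have hCb : ∀ k, |w k| ≤ C := fun k =>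
      le_ciSup (f := fun k => |q.eval (d k ^ 2)|) (Set.Finite.bddAbove (Set.finite_range _)) k
    have hC0 : 0 ≤ C := le_trans (abs_nonneg _) (hCb (Classical.arbitrary _))
    -- positive semidefinite difference
    have hps_inner : (C ^ 2 • Matrix.diagonal d
        - diagonal w * diagonal d * diagonal w).PosSemidef := by
      rw [Matrix.diagonal_mul_diagonal, Matrix.diagonal_mul_diagonal, ← Matrix.diagonal_smul,
        Matrix.diagonal_sub]
      refine Matrix.PosSemidef.diagonal fun k => ?_
      have hdk : 0 < d k := hA.eigenvalues_pos k
      have hwk := hCb k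
      have hsq : w k ^ 2 ≤ C ^ 2 := by nlinarith [sq_abs (w k), abs_nonneg (w k)]
      simp only [Pi.sub_apply, Pi.smul_apply, smul_eq_mul, Pi.zero_apply]
      nlinarith [mul_le_mul_of_nonneg_right hsq (le_of_lt hdk)]
    have hS : (C ^ 2 • A - Q * A * Q).PosSemidef := by
      have hQAQ : Q * A * Q = U * (diagonal w * diagonal d * diagonal w) * star U := by
        rw [hQdiag, hspec, ncg_conj_mul h2, ncg_conj_mul h2]
      have hdiff : C ^ 2 • A - Q * A * Q
          = U * (C ^ 2 • diagonal d - diagonal w * diagonal d * diagonal w) * star U := by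
        rw [Matrix.mul_sub, Matrix.sub_mul, ncg_conj_smul, ← hspec, ← hQAQ]
      rw [hdiff]
      have := hps_inner.mul_mul_conjTranspose_same U
      rwa [← Matrix.star_eq_conjTranspose] at this
    -- trace inequality
    have hps1 : (Eᴴ * (C ^ 2 • A - Q * A * Q) * E).PosSemidef :=
      hS.conjTranspose_mul_mul_same E
    have hexp : Eᴴ * (C ^ 2 • A - Q * A * Q) * E
        = C ^ 2 • (Eᴴ * A * E) - Eᴴ * (Q * A * Q) * E := by
      rw [mul_sub Eᴴ (C ^ 2 • A) (Q * A * Q), sub_mul (Eᴴ * (C ^ 2 • A)) (Eᴴ * (Q * A * Q)) E,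
        Matrix.mul_smul, Matrix.smul_mul]
    have h0 : 0 ≤ (C ^ 2 • (Eᴴ * A * E) - Eᴴ * (Q * A * Q) * E).trace := by
      rw [← hexp]; exact ncg_trace_nonneg hps1
    rw [Matrix.trace_sub, Matrix.trace_smul, sub_nonneg, smul_eq_mul] at h0
    have hQsym : Qᵀ = Q := by
      rw [← Matrix.conjTranspose_eq_transpose_of_trivial, hQdiag,
        Matrix.star_eq_conjTranspose, Matrix.conjTranspose_mul, Matrix.conjTranspose_mul,
        Matrix.conjTranspose_conjTranspose, Matrix.diagonal_conjTranspose]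
      simp [mul_assoc, star_trivial]
    have hEH : Eᴴ = Eᵀ := Matrix.conjTranspose_eq_transpose_of_trivial E
    -- final computation
    have lhs_eq : finnerA A (A⁻¹ - (M₀ + V)) (A⁻¹ - (M₀ + V))
        = (Eᴴ * (Q * A * Q) * E).trace := by
      unfold finnerA
      rw [hQE, hEH]
      congr 1
      rw [Matrix.transpose_mul, hQsym]
      noncomm_ring
    have rhs_eq : finnerA A E E = (Eᴴ * A * E).trace := by unfold finnerA; rw [hEH]
    have hEA_nonneg : 0 ≤ (Eᴴ * A * E).trace :=
      ncg_trace_nonneg (hA.posSemidef.conjTranspose_mul_mul_same E)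
    unfold fnormA
    rw [lhs_eq, rhs_eq]
    calc Real.sqrt ((Eᴴ * (Q * A * Q) * E).trace)
        ≤ Real.sqrt (C ^ 2 * (Eᴴ * A * E).trace) := Real.sqrt_le_sqrt h0
      _ = C * Real.sqrt ((Eᴴ * A * E).trace) := by
          rw [Real.sqrt_mul (by positivity), Real.sqrt_sq hC0]
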